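/- Levin's duality: min over h ∈ Γ^{h̄}(f,g) of ∬ c(x,y) h(x,y) dx dy equals the supremum over triples (u,v,w) with u ∈ L¹(f dx), v ∈ L¹(g dy), w ∈ L¹(h̄ dx dy), u(x) + v(y) − w(x,y) + c(x,y) ≥ 0 and w ≤ 0, of −∫ u f dx − ∫ v g dy + ∬ w h̄ dx dy. -/

import Mathlib

open MeasureTheory

open scoped ENNReal NNReal

namespace LevinAux

variable {X Y : Type*} [MeasureSpace X] [MeasureSpace Y]
  [SigmaFinite (volume : Measure X)] [SigmaFinite (volume : Measure Y)]

lemma integral_fst_mul {u : X → ℝ} {h : X × Y → ℝ}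
    (hint : Integrable (fun p : X × Y => u p.1 * h p)) :
    (∫ p : X × Y, u p.1 * h p) = ∫ x, u x * ∫ y, h (x, y) := by
  have hint' : Integrable (fun p : X × Y => u p.1 * h p)
      ((volume : Measure X).prod volume) := by rwa [← Measure.volume_eq_prod]
  calc (∫ p : X × Y, u p.1 * h p)
      = ∫ p : X × Y, u p.1 * h p ∂((volume : Measure X).prod volume) := by
        rw [← Measure.volume_eq_prod]
    _ = ∫ x, ∫ y, u x * h (x, y) := integral_prod _ hint'
    _ = ∫ x, u x * ∫ y, h (x, y) := by
        congr 1; funext x; exact integral_const_mul _ _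

lemma integral_snd_mul {v : Y → ℝ} {h : X × Y → ℝ}
    (hint : Integrable (fun p : X × Y => v p.2 * h p)) :
    (∫ p : X × Y, v p.2 * h p) = ∫ y, v y * ∫ x, h (x, y) := by
  have hint' : Integrable (fun p : X × Y => v p.2 * h p)
      ((volume : Measure X).prod volume) := by rwa [← Measure.volume_eq_prod]
  calc (∫ p : X × Y, v p.2 * h p)
      = ∫ p : X × Y, v p.2 * h p ∂((volume : Measure X).prod volume) := by
        rw [← Measure.volume_eq_prod]
    _ = ∫ y, ∫ x, v y * h (x, y) := integral_prod_symm _ hint'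
    _ = ∫ y, v y * ∫ x, h (x, y) := by
        congr 1; funext y; exact integral_const_mul _ _

lemma integrable_fst_mul_of_bdd {u : X → ℝ} {h : X × Y → ℝ} (hu : Measurable u)
    (B : ℝ) (hB : ∀ x, |u x| ≤ B) (hint : Integrable h) :
    Integrable (fun p : X × Y => u p.1 * h p) :=
  hint.bdd_mul (hu.comp measurable_fst).aestronglyMeasurable
    (c := B) (Filter.Eventually.of_forall fun p => by simpa [Real.norm_eq_abs] using hB p.1)

lemma integrable_snd_mul_of_bdd {v : Y → ℝ} {h : X × Y → ℝ} (hv : Measurable v)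
    (B : ℝ) (hB : ∀ y, |v y| ≤ B) (hint : Integrable h) :
    Integrable (fun p : X × Y => v p.2 * h p) :=
  hint.bdd_mul (hv.comp measurable_snd).aestronglyMeasurable
    (c := B) (Filter.Eventually.of_forall fun p => by simpa [Real.norm_eq_abs] using hB p.2)

lemma integrable_fst_mul_of_marg {u : X → ℝ} {f : X → ℝ} {h : X × Y → ℝ}
    (hu : Measurable u) (hh : Measurable h) (hhi : Integrable h)
    (hpos : ∀ᵐ p : X × Y, 0 ≤ h p)
    (hmarg : ∀ᵐ x, (∫ y, h (x, y)) = f x)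
    (hf : ∀ x, 0 ≤ f x)
    (huf : Integrable (fun x => u x * f x)) :
    Integrable (fun p : X × Y => u p.1 * h p) := by
  refine ⟨((hu.comp measurable_fst).mul hh).aestronglyMeasurable, ?_⟩
  have hprod : Integrable h ((volume : Measure X).prod volume) := by
    rwa [← Measure.volume_eq_prod]
  have hae' : ∀ᵐ p : X × Y ∂((volume : Measure X).prod volume), 0 ≤ h p := by
    rwa [← Measure.volume_eq_prod]
  have h1 : ∀ᵐ x : X, ∀ᵐ y : Y, 0 ≤ h (x, y) := Measure.ae_ae_of_ae_prod hae'
  have h2 : ∀ᵐ x : X, Integrable (fun y => h (x, y)) := hprod.prod_right_ae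
  have key : ∀ᵐ x : X, (∫⁻ y, ‖h (x, y)‖₊) = ENNReal.ofReal (f x) := by
    filter_upwards [h1, h2, hmarg] with x hx1 hx2 hx3
    have e1 : (∫⁻ y, (‖h (x, y)‖₊ : ℝ≥0∞)) = ∫⁻ y, ENNReal.ofReal (h (x, y)) := by
      apply lintegral_congr_ae
      filter_upwards [hx1] with y hy
      exact Real.enorm_eq_ofReal hy
    rw [e1, ← ofReal_integral_eq_lintegral_ofReal hx2 hx1, hx3]
  show (∫⁻ p : X × Y, ‖u p.1 * h p‖₊) < ⊤
  have meq : (∫⁻ p : X × Y, (‖u p.1 * h p‖₊ : ℝ≥0∞))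
      = ∫⁻ p : X × Y, (‖u p.1 * h p‖₊ : ℝ≥0∞) ∂((volume : Measure X).prod volume) := by
    rw [← Measure.volume_eq_prod]
  rw [meq, lintegral_prod (fun p : X × Y => (‖u p.1 * h p‖₊ : ℝ≥0∞))
    (((hu.comp measurable_fst).mul hh).enorm.aemeasurable)]
  have inner_eq : ∀ᵐ x : X, (∫⁻ y, (‖u x * h (x, y)‖₊ : ℝ≥0∞))
      = (‖u x * f x‖₊ : ℝ≥0∞) := by
    filter_upwards [key] with x hx
    calc (∫⁻ y, (‖u x * h (x, y)‖₊ : ℝ≥0∞))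
        = ∫⁻ y, (‖u x‖₊ : ℝ≥0∞) * ‖h (x, y)‖₊ := by
          simp only [nnnorm_mul, ENNReal.coe_mul]
      _ = (‖u x‖₊ : ℝ≥0∞) * ∫⁻ y, ‖h (x, y)‖₊ :=
          lintegral_const_mul _ (hh.enorm.comp measurable_prodMk_left)
      _ = (‖u x‖₊ : ℝ≥0∞) * ENNReal.ofReal (f x) := by rw [hx]
      _ = (‖u x * f x‖₊ : ℝ≥0∞) := by
          rw [nnnorm_mul, ENNReal.coe_mul, ← Real.enorm_eq_ofReal (hf x)]; rfl
  calc (∫⁻ x, ∫⁻ y, (‖u x * h (x, y)‖₊ : ℝ≥0∞))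
      = ∫⁻ x, (‖u x * f x‖₊ : ℝ≥0∞) := lintegral_congr_ae inner_eq
    _ < ⊤ := huf.hasFiniteIntegral

lemma integrable_snd_mul_of_marg {v : Y → ℝ} {g : Y → ℝ} {h : X × Y → ℝ}
    (hv : Measurable v) (hh : Measurable h) (hhi : Integrable h)
    (hpos : ∀ᵐ p : X × Y, 0 ≤ h p)
    (hmarg : ∀ᵐ y, (∫ x, h (x, y)) = g y)
    (hg : ∀ y, 0 ≤ g y)
    (hvg : Integrable (fun y => v y * g y)) :
    Integrable (fun p : X × Y => v p.2 * h p) := by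
  refine ⟨((hv.comp measurable_snd).mul hh).aestronglyMeasurable, ?_⟩
  have hprod : Integrable h ((volume : Measure X).prod volume) := by
    rwa [← Measure.volume_eq_prod]
  have h1 : ∀ᵐ y : Y, ∀ᵐ x : X, 0 ≤ h (x, y) := by
    have hae' : ∀ᵐ p : X × Y ∂((volume : Measure X).prod volume), 0 ≤ h p := by
      rwa [← Measure.volume_eq_prod]
    have hswap : ∀ᵐ q : Y × X ∂((volume : Measure Y).prod volume), 0 ≤ h (q.2, q.1) := by
      rw [← Measure.prod_swap]
      refine (MeasureTheory.ae_map_iff measurable_swap.aemeasurable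
        (measurableSet_le measurable_const (hh.comp measurable_swap))).2 ?_
      simpa using hae'
    exact Measure.ae_ae_of_ae_prod hswap
  have h2 : ∀ᵐ y : Y, Integrable (fun x => h (x, y)) := hprod.prod_left_ae
  have key : ∀ᵐ y : Y, (∫⁻ x, ‖h (x, y)‖₊) = ENNReal.ofReal (g y) := by
    filter_upwards [h1, h2, hmarg] with y hy1 hy2 hy3
    have e1 : (∫⁻ x, (‖h (x, y)‖₊ : ℝ≥0∞)) = ∫⁻ x, ENNReal.ofReal (h (x, y)) := by
      apply lintegral_congr_ae
      filter_upwards [hy1] with x hx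
      exact Real.enorm_eq_ofReal hx
    rw [e1, ← ofReal_integral_eq_lintegral_ofReal hy2 hy1, hy3]
  show (∫⁻ p : X × Y, ‖v p.2 * h p‖₊) < ⊤
  have meq : (∫⁻ p : X × Y, (‖v p.2 * h p‖₊ : ℝ≥0∞))
      = ∫⁻ p : X × Y, (‖v p.2 * h p‖₊ : ℝ≥0∞) ∂((volume : Measure X).prod volume) := by
    rw [← Measure.volume_eq_prod]
  rw [meq, lintegral_prod_symm (fun p : X × Y => (‖v p.2 * h p‖₊ : ℝ≥0∞))
    (((hv.comp measurable_snd).mul hh).enorm.aemeasurable)]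
  have inner_eq : ∀ᵐ y : Y, (∫⁻ x, (‖v y * h (x, y)‖₊ : ℝ≥0∞))
      = (‖v y * g y‖₊ : ℝ≥0∞) := by
    filter_upwards [key] with y hy
    calc (∫⁻ x, (‖v y * h (x, y)‖₊ : ℝ≥0∞))
        = ∫⁻ x, (‖v y‖₊ : ℝ≥0∞) * ‖h (x, y)‖₊ := by
          simp only [nnnorm_mul, ENNReal.coe_mul]
      _ = (‖v y‖₊ : ℝ≥0∞) * ∫⁻ x, ‖h (x, y)‖₊ :=
          lintegral_const_mul _ (hh.enorm.comp (measurable_prodMk_right))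
      _ = (‖v y‖₊ : ℝ≥0∞) * ENNReal.ofReal (g y) := by rw [hy]
      _ = (‖v y * g y‖₊ : ℝ≥0∞) := by
          rw [nnnorm_mul, ENNReal.coe_mul, ← Real.enorm_eq_ofReal (hg y)]; rfl
  calc (∫⁻ y, ∫⁻ x, (‖v y * h (x, y)‖₊ : ℝ≥0∞))
      = ∫⁻ y, (‖v y * g y‖₊ : ℝ≥0∞) := lintegral_congr_ae inner_eq
    _ < ⊤ := hvg.hasFiniteIntegral

lemma weak_duality
    (hbar c h₀ : X × Y → ℝ) (f : X → ℝ) (g : Y → ℝ)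
    (u : X → ℝ) (v : Y → ℝ) (w : X × Y → ℝ)
    (hbar_int : Integrable hbar)
    (f_nonneg : ∀ x, 0 ≤ f x) (g_nonneg : ∀ y, 0 ≤ g y)
    (hc : AEStronglyMeasurable c volume)
    (hcbar : Integrable (fun p => c p * hbar p))
    (h₀_meas : Measurable h₀)
    (h₀_bds : ∀ᵐ p : X × Y, 0 ≤ h₀ p ∧ h₀ p ≤ hbar p)
    (h₀_margx : ∀ᵐ x, (∫ y, h₀ (x, y)) = f x)
    (h₀_margy : ∀ᵐ y, (∫ x, h₀ (x, y)) = g y)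
    (hu : Measurable u) (hv : Measurable v) (hw : Measurable w)
    (huf : Integrable (fun x => u x * f x)) (hvg : Integrable (fun y => v y * g y))
    (hwh : Integrable (fun p => w p * hbar p))
    (hcon : ∀ᵐ p : X × Y, 0 ≤ u p.1 + v p.2 - w p + c p)
    (hwn : ∀ᵐ p : X × Y, w p ≤ 0) :
    -(∫ x, u x * f x) - (∫ y, v y * g y) + (∫ p, w p * hbar p) ≤ ∫ p, c p * h₀ p := by
  have h₀_nn : ∀ᵐ p : X × Y, 0 ≤ h₀ p := h₀_bds.mono fun p hp => hp.1
  have h₀_int : Integrable h₀ := hbar_int.mono' h₀_meas.aestronglyMeasurable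
    (h₀_bds.mono fun p hp => by rw [Real.norm_eq_abs, abs_of_nonneg hp.1]; exact hp.2)
  have iu : Integrable (fun p : X × Y => u p.1 * h₀ p) :=
    integrable_fst_mul_of_marg hu h₀_meas h₀_int h₀_nn h₀_margx f_nonneg huf
  have iv : Integrable (fun p : X × Y => v p.2 * h₀ p) :=
    integrable_snd_mul_of_marg hv h₀_meas h₀_int h₀_nn h₀_margy g_nonneg hvg
  have iw : Integrable (fun p : X × Y => w p * h₀ p) := by
    refine Integrable.mono' hwh.abs ((hw.mul h₀_meas).aestronglyMeasurable) ?_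
    filter_upwards [h₀_bds] with p hp
    rw [Real.norm_eq_abs, abs_mul, abs_mul]
    exact mul_le_mul_of_nonneg_left
      (by rw [abs_of_nonneg hp.1]; exact le_trans hp.2 (le_abs_self _)) (abs_nonneg _)
  have ic : Integrable (fun p : X × Y => c p * h₀ p) := by
    refine Integrable.mono' hcbar.abs (hc.mul h₀_meas.aestronglyMeasurable) ?_
    filter_upwards [h₀_bds] with p hp
    rw [Real.norm_eq_abs, abs_mul, abs_mul]
    exact mul_le_mul_of_nonneg_left
      (by rw [abs_of_nonneg hp.1]; exact le_trans hp.2 (le_abs_self _)) (abs_nonneg _)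
  have eu : (∫ p : X × Y, u p.1 * h₀ p) = ∫ x, u x * f x := by
    rw [integral_fst_mul iu]
    apply integral_congr_ae
    filter_upwards [h₀_margx] with x hx; rw [hx]
  have ev : (∫ p : X × Y, v p.2 * h₀ p) = ∫ y, v y * g y := by
    rw [integral_snd_mul iv]
    apply integral_congr_ae
    filter_upwards [h₀_margy] with y hy; rw [hy]
  have ew : (∫ p : X × Y, w p * hbar p) ≤ ∫ p : X × Y, w p * h₀ p := by
    apply integral_mono_ae hwh iw
    filter_upwards [h₀_bds, hwn] with p hp hw0
    exact mul_le_mul_of_nonpos_left hp.2 hw0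
  have key : 0 ≤ ∫ p : X × Y, (u p.1 + v p.2 - w p + c p) * h₀ p :=
    integral_nonneg_of_ae (by
      filter_upwards [hcon, h₀_nn] with p h1 h2; exact mul_nonneg h1 h2)
  have expand : (fun p : X × Y => (u p.1 + v p.2 - w p + c p) * h₀ p)
      = fun p : X × Y => (u p.1 * h₀ p + v p.2 * h₀ p - w p * h₀ p) + c p * h₀ p := by
    funext p; ring
  have isum2 : Integrable (fun p : X × Y => u p.1 * h₀ p + v p.2 * h₀ p) := iu.add iv
  have isum : Integrable (fun p : X × Y => u p.1 * h₀ p + v p.2 * h₀ p - w p * h₀ p) :=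
    isum2.sub iw
  rw [expand, integral_add isum ic, integral_sub isum2 iw,
    integral_add iu iv, eu, ev] at key
  linarith

lemma finsum_integral {Z : Type*} [MeasurableSpace Z] {ν : Measure Z} {ι : Type*} (s : Finset ι)
    (c : ι → ℝ) (F : ι → Z → ℝ) (hF : ∀ i ∈ s, Integrable (F i) ν) :
    ∑ i ∈ s, c i * ∫ z, F i z ∂ν = ∫ z, ∑ i ∈ s, c i * F i z ∂ν := by
  rw [integral_finset_sum s (fun i hi => (hF i hi).const_mul (c i))]
  exact Finset.sum_congr rfl fun i hi => (integral_const_mul _ _).symm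

set_option maxHeartbeats 2000000 in
lemma core_duality
    (hbar c' : X × Y → ℝ) (f : X → ℝ) (g : Y → ℝ) (K : Set (X × Y)) (γ C₀ B' : ℝ)
    (hbar_meas : Measurable hbar) (hbar_nonneg : ∀ p, 0 ≤ hbar p)
    (hbar_le : ∀ p, hbar p ≤ C₀)
    (hK : MeasurableSet K) (hKfin : volume K ≠ ⊤) (hKsupp : ∀ p ∉ K, hbar p = 0)
    (f_int : Integrable f) (g_int : Integrable g)
    (f_meas : Measurable f) (g_meas : Measurable g)
    (hc' : Measurable c') (hc'b : ∀ p, |c' p| ≤ B')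
    (H : ∀ h : X × Y → ℝ, Measurable h → (∀ᵐ p : X × Y, 0 ≤ h p ∧ h p ≤ hbar p) →
        (∀ᵐ x, (∫ y, h (x, y)) = f x) → (∀ᵐ y, (∫ x, h (x, y)) = g y) →
        γ < ∫ p, c' p * h p) :
    ∃ (u : X → ℝ) (v : Y → ℝ), Measurable u ∧ Measurable v ∧
      (∃ B, ∀ x, |u x| ≤ B) ∧ (∃ B, ∀ y, |v y| ≤ B) ∧
      γ < -(∫ x, u x * f x) - (∫ y, v y * g y) +
          ∫ p, min (c' p + u p.1 + v p.2) 0 * hbar p := by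
  classical
  set μ : Measure (X × Y) := volume.restrict K with hμdef
  haveI : IsFiniteMeasure μ := ⟨by
    rw [hμdef, Measure.restrict_apply_univ]; exact hKfin.lt_top⟩
  have memB : ∀ (G : X × Y → ℝ), Measurable G → ∀ (B : ℝ), (∀ p, |G p| ≤ B) → MemLp G 2 μ :=
    fun G hG B hB => MemLp.of_bound hG.aestronglyMeasurable B
      (Filter.Eventually.of_forall fun p => by simpa [Real.norm_eq_abs] using hB p)
  have mem_hbar : MemLp hbar 2 μ := memB hbar hbar_meas C₀
    (fun p => by rw [abs_of_nonneg (hbar_nonneg p)]; exact hbar_le p)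
  set hbarL : Lp ℝ 2 μ := mem_hbar.toLp hbar with hbarLdef
  set R : ℝ := ‖hbarL‖ with hRdef
  have inner_eval : ∀ (h1 G : Lp ℝ 2 μ), (inner ℝ h1 G : ℝ) = ∫ p, h1 p * G p ∂μ := by
    intro h1 G
    rw [MeasureTheory.L2.inner_def]
    apply integral_congr_ae
    filter_upwards with p
    rw [RCLike.inner_apply', starRingEnd_apply, star_trivial]
  -- the compact convex set X'
  set X' : Set (WeakDual ℝ (Lp ℝ 2 μ)) :=
    {ℓ | ‖WeakDual.toStrongDual ℓ‖ ≤ R} ∩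
      ⋂ (G : Lp ℝ 2 μ) (_ : 0 ≤ᵐ[μ] (G : X × Y → ℝ)),
        {ℓ | ℓ G ∈ Set.Icc (0:ℝ) (inner ℝ hbarL G)} with hX'def
  have ball_closed : IsClosed {ℓ : WeakDual ℝ (Lp ℝ 2 μ) | ‖WeakDual.toStrongDual ℓ‖ ≤ R} ∧
      IsCompact {ℓ : WeakDual ℝ (Lp ℝ 2 μ) | ‖WeakDual.toStrongDual ℓ‖ ≤ R} := by
    have hcb := WeakDual.isCompact_closedBall (0 : StrongDual ℝ (Lp ℝ 2 μ)) R
    have hset : (⇑WeakDual.toStrongDual ⁻¹' Metric.closedBall (0 : StrongDual ℝ (Lp ℝ 2 μ)) R)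
        = {ℓ : WeakDual ℝ (Lp ℝ 2 μ) | ‖WeakDual.toStrongDual ℓ‖ ≤ R} := by
      ext ℓ; simp [Metric.mem_closedBall, dist_zero_right]
    rw [hset] at hcb
    exact ⟨hcb.isClosed, hcb⟩
  have X'_closed : IsClosed X' := by
    refine ball_closed.1.inter ?_
    refine isClosed_iInter fun G => isClosed_iInter fun hG => ?_
    exact IsClosed.preimage (WeakDual.eval_continuous G) isClosed_Icc
  have X'_cpt : IsCompact X' := ball_closed.2.of_isClosed_subset X'_closed Set.inter_subset_left
  have X'_cond : ∀ ℓ ∈ X', ∀ (G : Lp ℝ 2 μ), 0 ≤ᵐ[μ] (G : X × Y → ℝ) →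
      0 ≤ ℓ G ∧ ℓ G ≤ (inner ℝ hbarL G : ℝ) := by
    intro ℓ hℓ G hG
    have := Set.mem_iInter₂.1 hℓ.2 G hG
    exact ⟨this.1, this.2⟩
  have zero_mem : (0 : WeakDual ℝ (Lp ℝ 2 μ)) ∈ X' := by
    constructor
    · show ‖WeakDual.toStrongDual (0 : WeakDual ℝ (Lp ℝ 2 μ))‖ ≤ R
      rw [map_zero, norm_zero]; exact norm_nonneg _
    · refine Set.mem_iInter₂.2 fun G hG => ?_
      have : (0 : WeakDual ℝ (Lp ℝ 2 μ)) G = 0 := rfl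
      refine Set.mem_setOf.2 ⟨le_of_eq this.symm, ?_⟩
      rw [this, inner_eval]
      refine integral_nonneg_of_ae ?_
      filter_upwards [mem_hbar.coeFn_toLp, hG] with p h1 h2
      rw [show hbarL p = hbar p from h1]
      exact mul_nonneg (hbar_nonneg p) h2
  -- representation of elements of X'
  have master : ∀ ℓ ∈ X', ∃ ht : X × Y → ℝ, Measurable ht ∧
      (∀ p, 0 ≤ ht p ∧ ht p ≤ hbar p) ∧ (∀ p ∉ K, ht p = 0) ∧
      ∀ (G : X × Y → ℝ) (hG : MemLp G 2 μ), ℓ (hG.toLp G) = ∫ p, G p * ht p := by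
    intro ℓ hℓ
    set hrep : Lp ℝ 2 μ := (InnerProductSpace.toDual ℝ (Lp ℝ 2 μ)).symm
      (WeakDual.toStrongDual ℓ) with hrepdef
    have eval_eq : ∀ G : Lp ℝ 2 μ, ℓ G = ∫ p, hrep p * G p ∂μ := by
      intro G
      have h1 : (inner ℝ hrep G : ℝ) = ℓ G := InnerProductSpace.toDual_symm_apply
      rw [← h1, inner_eval]
    have hrep_int : Integrable (hrep : X × Y → ℝ) μ :=
      (Lp.memLp hrep).integrable (by norm_num)
    have hbar_int_mu : Integrable hbar μ := mem_hbar.integrable (by norm_num)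
    have hAcond : ∀ A : Set (X × Y), MeasurableSet A →
        (0 ≤ ∫ p in A, hrep p ∂μ) ∧ (∫ p in A, hrep p ∂μ) ≤ ∫ p in A, hbar p ∂μ := by
      intro A hA
      have memInd : MemLp (A.indicator (fun _ => (1:ℝ))) 2 μ :=
        memLp_indicator_const 2 hA 1 (Or.inr (measure_ne_top μ A))
      set G : Lp ℝ 2 μ := memInd.toLp _ with hGdef
      have hGcoe : (G : X × Y → ℝ) =ᵐ[μ] A.indicator (fun _ => (1:ℝ)) := memInd.coeFn_toLp
      have hGnn : 0 ≤ᵐ[μ] (G : X × Y → ℝ) := by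
        filter_upwards [hGcoe] with p hp
        rw [hp]; exact Set.indicator_nonneg (fun _ _ => zero_le_one) p
      have hic := X'_cond ℓ hℓ G hGnn
      have e1 : ℓ G = ∫ p in A, hrep p ∂μ := by
        rw [eval_eq]
        have step1 : ∫ p, hrep p * (G : X × Y → ℝ) p ∂μ
            = ∫ p, hrep p * A.indicator (fun _ => (1:ℝ)) p ∂μ :=
          integral_congr_ae (by filter_upwards [hGcoe] with p hp; rw [hp])
        have step2 : (fun p => hrep p * A.indicator (fun _ => (1:ℝ)) p)
            = A.indicator (fun p => hrep p) := by
          funext p; by_cases hp : p ∈ A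
          · rw [Set.indicator_of_mem hp, Set.indicator_of_mem hp, mul_one]
          · rw [Set.indicator_of_notMem hp, Set.indicator_of_notMem hp, mul_zero]
        rw [step1, step2, integral_indicator hA]
      have e2 : (inner ℝ hbarL G : ℝ) = ∫ p in A, hbar p ∂μ := by
        rw [inner_eval]
        have step1 : ∫ p, hbarL p * (G : X × Y → ℝ) p ∂μ
            = ∫ p, hbar p * A.indicator (fun _ => (1:ℝ)) p ∂μ :=
          integral_congr_ae (by
            filter_upwards [hGcoe, mem_hbar.coeFn_toLp] with p hp hp2
            rw [hp, show hbarL p = hbar p from hp2])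
        have step2 : (fun p => hbar p * A.indicator (fun _ => (1:ℝ)) p)
            = A.indicator (fun p => hbar p) := by
          funext p; by_cases hp : p ∈ A
          · rw [Set.indicator_of_mem hp, Set.indicator_of_mem hp, mul_one]
          · rw [Set.indicator_of_notMem hp, Set.indicator_of_notMem hp, mul_zero]
        rw [step1, step2, integral_indicator hA]
      exact ⟨e1 ▸ hic.1, by rw [← e1, ← e2]; exact hic.2⟩
    have hrep_nn : 0 ≤ᵐ[μ] (hrep : X × Y → ℝ) :=
      ae_nonneg_of_forall_setIntegral_nonneg hrep_int (fun s hs _ => (hAcond s hs).1)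
    have hrep_le : ∀ᵐ p ∂μ, (hrep : X × Y → ℝ) p ≤ hbar p := by
      have hdiff : 0 ≤ᵐ[μ] fun p => hbar p - (hrep : X × Y → ℝ) p := by
        refine ae_nonneg_of_forall_setIntegral_nonneg (hbar_int_mu.sub hrep_int)
          (fun s hs _ => ?_)
        rw [integral_sub hbar_int_mu.integrableOn hrep_int.integrableOn]
        linarith [(hAcond s hs).2]
      filter_upwards [hdiff] with p hp
      simpa using hp
    set ht : X × Y → ℝ :=
      K.indicator (fun p => max 0 (min ((hrep : X × Y → ℝ) p) (hbar p))) with htdef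
    have ht_meas : Measurable ht :=
      (measurable_const.max ((Lp.stronglyMeasurable hrep).measurable.min hbar_meas)).indicator hK
    have ht_bds : ∀ p, 0 ≤ ht p ∧ ht p ≤ hbar p := by
      intro p
      by_cases hp : p ∈ K
      · rw [htdef]; simp only [Set.indicator_of_mem hp]
        exact ⟨le_max_left _ _, max_le (hbar_nonneg p) (min_le_right _ _)⟩
      · rw [htdef]; simp only [Set.indicator_of_notMem hp]
        exact ⟨le_refl 0, hbar_nonneg p⟩
    have ht_supp : ∀ p ∉ K, ht p = 0 := fun p hp => Set.indicator_of_notMem hp _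
    have ht_ae : ht =ᵐ[μ] (hrep : X × Y → ℝ) := by
      have hKae : ∀ᵐ p ∂μ, p ∈ K := ae_restrict_mem hK
      filter_upwards [hKae, hrep_nn, hrep_le] with p hp h1 h2
      have h1' : (0:ℝ) ≤ (hrep : X × Y → ℝ) p := h1
      rw [htdef]; simp only [Set.indicator_of_mem hp]
      rw [min_eq_left h2, max_eq_right h1']
    refine ⟨ht, ht_meas, ht_bds, ht_supp, fun G hG => ?_⟩
    have e1 : ℓ (hG.toLp G) = ∫ p, hrep p * (hG.toLp G : X × Y → ℝ) p ∂μ := eval_eq _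
    have e2 : ∫ p, hrep p * (hG.toLp G : X × Y → ℝ) p ∂μ = ∫ p, G p * ht p ∂μ :=
      integral_congr_ae (by
        filter_upwards [hG.coeFn_toLp, ht_ae] with p hp1 hp2
        rw [hp1, hp2, mul_comm])
    have e3 : ∫ p, G p * ht p ∂μ = ∫ p, G p * ht p := by
      have hfun : (fun p => G p * ht p) = K.indicator (fun q => G q * ht q) := by
        funext p; by_cases hp : p ∈ K
        · rw [Set.indicator_of_mem hp]
        · rw [Set.indicator_of_notMem hp, ht_supp p hp, mul_zero]
      conv_rhs => rw [hfun]
      rw [integral_indicator hK]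
    rw [e1, e2, e3]
  -- admissible multipliers
  let YT := {y : (X → ℝ) × (Y → ℝ) // Measurable y.1 ∧ Measurable y.2 ∧
      (∃ B, ∀ x, |y.1 x| ≤ B) ∧ (∃ B, ∀ z, |y.2 z| ≤ B)}
  have mem_vec : ∀ y : YT, MemLp (fun p : X × Y => c' p + y.1.1 p.1 + y.1.2 p.2) 2 μ := by
    rintro ⟨⟨u, v⟩, hu, hv, ⟨Bu, hBu⟩, ⟨Bv, hBv⟩⟩
    refine memB _ ((hc'.add (hu.comp measurable_fst)).add (hv.comp measurable_snd))
      (B' + Bu + Bv) (fun p => ?_)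
    calc |c' p + u p.1 + v p.2| ≤ |c' p + u p.1| + |v p.2| := abs_add_le _ _
      _ ≤ (|c' p| + |u p.1|) + |v p.2| := add_le_add (abs_add_le _ _) le_rfl
      _ ≤ (B' + Bu) + Bv := add_le_add (add_le_add (hc'b p) (hBu p.1)) (hBv p.2)
  let vec : YT → Lp ℝ 2 μ := fun y => (mem_vec y).toLp _
  let L : WeakDual ℝ (Lp ℝ 2 μ) → YT → ℝ := fun ℓ y =>
    ℓ (vec y) - (∫ x, y.1.1 x * f x) - (∫ z, y.1.2 z * g z)
  have ind_int : Integrable (K.indicator fun _ => C₀) :=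
    (integrable_indicator_iff hK).2 (integrableOn_const hKfin)
  -- each element of X' lies in some O_y
  have cover : ∀ ℓ ∈ X', ∃ y : YT, γ < L ℓ y := by
    intro ℓ hℓ
    obtain ⟨ht, ht_meas, ht_bds, ht_supp, ht_eval⟩ := master ℓ hℓ
    have ht_int : Integrable ht := by
      refine ind_int.mono' ht_meas.aestronglyMeasurable (Filter.Eventually.of_forall fun p => ?_)
      by_cases hp : p ∈ K
      · rw [Set.indicator_of_mem hp, Real.norm_eq_abs, abs_of_nonneg (ht_bds p).1]
        exact le_trans (ht_bds p).2 (hbar_le p)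
      · rw [Set.indicator_of_notMem hp, ht_supp p hp]; simp
    have ht_int_prod : Integrable ht ((volume : Measure X).prod volume) := by
      rwa [← Measure.volume_eq_prod]
    have c'ht_int : Integrable (fun p => c' p * ht p) :=
      ht_int.bdd_mul hc'.aestronglyMeasurable
        (c := B') (Filter.Eventually.of_forall fun p => by simpa [Real.norm_eq_abs] using hc'b p)
    by_cases hx : (∀ᵐ x, (∫ y, ht (x, y)) = f x)
    · by_cases hy : (∀ᵐ y, (∫ x, ht (x, y)) = g y)
      · -- feasible case
        have hfeas := H ht ht_meas (Filter.Eventually.of_forall ht_bds) hx hy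
        set y0 : YT := ⟨((fun _ => 0), (fun _ => 0)), measurable_const, measurable_const,
          ⟨0, fun x => by simp⟩, ⟨0, fun z => by simp⟩⟩ with hy0
        refine ⟨y0, ?_⟩
        have heval : L ℓ y0 = (∫ p : X × Y, (c' p + (0:ℝ) + (0:ℝ)) * ht p)
            - (∫ x, (0:ℝ) * f x) - (∫ z, (0:ℝ) * g z) := by
          show ℓ (vec y0) - _ - _ = _
          rw [ht_eval _ (mem_vec y0)]
        have e0 : (fun p : X × Y => (c' p + (0:ℝ) + (0:ℝ)) * ht p)
            = fun p : X × Y => c' p * ht p := by funext p; ring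
        rw [heval, e0]
        simpa using hfeas
      · -- y-marginal fails
        have marg_meas : Measurable fun z : Y => ∫ x, ht (x, z) :=
          (StronglyMeasurable.integral_prod_left' ht_meas.stronglyMeasurable).measurable
        have marg_int : Integrable fun z : Y => ∫ x, ht (x, z) :=
          ht_int_prod.integral_prod_right
        set d : Y → ℝ := fun z => (∫ x, ht (x, z)) - g z with hddef
        have d_meas : Measurable d := marg_meas.sub g_meas
        have d_int : Integrable d := marg_int.sub g_int
        have dne : ¬ d =ᵐ[volume] 0 := by
          intro hcontra
          exact hy (by filter_upwards [hcontra] with z h0; exact sub_eq_zero.1 h0)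
        set ρ : ℝ := ∫ z, |d z| with hρdef
        have ρ_pos : 0 < ρ := by
          rcases lt_or_eq_of_le (integral_nonneg (f := fun z => |d z|) (fun z => abs_nonneg (d z))) with h | h
          · exact h
          · exfalso
            apply dne
            have := (integral_eq_zero_iff_of_nonneg (fun z => abs_nonneg (d z)) d_int.abs).1 h.symm
            filter_upwards [this] with z hz
            simpa using hz
        set v : Y → ℝ := fun z => if 0 < d z then 1 else if d z < 0 then -1 else 0 with hvdef
        have v_meas : Measurable v :=
          Measurable.ite (measurableSet_lt measurable_const d_meas) measurable_const
            (Measurable.ite (measurableSet_lt d_meas measurable_const) measurable_const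
              measurable_const)
        have v_bd : ∀ z, |v z| ≤ 1 := by
          intro z; rw [hvdef]
          by_cases h1 : 0 < d z
          · simp [h1]
          · by_cases h2 : d z < 0 <;> simp [h1, h2]
        have vd : ∀ z, v z * d z = |d z| := by
          intro z; rw [hvdef]
          by_cases h1 : 0 < d z
          · simp [h1, abs_of_pos h1]
          · by_cases h2 : d z < 0
            · simp [h1, h2, abs_of_neg h2]
            · have : d z = 0 := le_antisymm (not_lt.1 h1) (not_lt.1 h2)
              simp [h1, h2, this]
        set A : ℝ := ∫ p : X × Y, c' p * ht p with hAdef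
        set T : ℝ := (γ + 1 - A) / ρ with hTdef
        set vT : Y → ℝ := fun z => T * v z with hvTdef
        have vT_meas : Measurable vT := measurable_const.mul v_meas
        have vT_bd : ∀ z, |vT z| ≤ |T| := fun z => by
          rw [hvTdef, abs_mul]
          calc |T| * |v z| ≤ |T| * 1 := mul_le_mul_of_nonneg_left (v_bd z) (abs_nonneg T)
            _ = |T| := mul_one _
        have vTht_int : Integrable (fun p : X × Y => vT p.2 * ht p) :=
          integrable_snd_mul_of_bdd vT_meas |T| vT_bd ht_int
        set yT : YT := ⟨((fun _ => 0), vT), measurable_const, vT_meas,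
          ⟨0, fun x => by simp⟩, ⟨|T|, vT_bd⟩⟩ with hyT
        refine ⟨yT, ?_⟩
        have heval : L ℓ yT = (∫ p : X × Y, (c' p + (0:ℝ) + vT p.2) * ht p)
            - (∫ x, (0:ℝ) * f x) - (∫ z, vT z * g z) := by
          show ℓ (vec yT) - _ - _ = _
          rw [ht_eval _ (mem_vec yT)]
        have expand : (fun p : X × Y => (c' p + (0:ℝ) + vT p.2) * ht p)
            = fun p : X × Y => c' p * ht p + vT p.2 * ht p := by
          funext p; ring
        have e1 : ∫ p : X × Y, (c' p + (0:ℝ) + vT p.2) * ht p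
            = A + ∫ p : X × Y, vT p.2 * ht p := by
          rw [expand, integral_add c'ht_int vTht_int]
        have e2 : (∫ p : X × Y, vT p.2 * ht p) = ∫ z, vT z * ∫ x, ht (x, z) :=
          integral_snd_mul vTht_int
        have vTmarg_int : Integrable fun z => vT z * ∫ x, ht (x, z) :=
          marg_int.bdd_mul vT_meas.aestronglyMeasurable
            (c := |T|) (Filter.Eventually.of_forall fun z => by simpa [Real.norm_eq_abs] using vT_bd z)
        have vTg_int : Integrable fun z => vT z * g z :=
          g_int.bdd_mul vT_meas.aestronglyMeasurable
            (c := |T|) (Filter.Eventually.of_forall fun z => by simpa [Real.norm_eq_abs] using vT_bd z)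
        have e3 : (∫ z, vT z * ∫ x, ht (x, z)) - (∫ z, vT z * g z) = T * ρ := by
          rw [← integral_sub vTmarg_int vTg_int]
          have : (fun z => vT z * (∫ x, ht (x, z)) - vT z * g z)
              = fun z => T * (v z * d z) := by
            funext z; rw [hvTdef, hddef]; ring
          rw [this]
          have : (fun z => T * (v z * d z)) = fun z => T * |d z| := by
            funext z; rw [vd z]
          rw [this, integral_const_mul, ← hρdef]
        have eT : T * ρ = γ + 1 - A := div_mul_cancel₀ _ (ne_of_gt ρ_pos)
        have z1 : (∫ x, (0:ℝ) * f x) = 0 := by simp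
        rw [heval, e1, z1, e2]
        linarith [e3, eT]
    · -- x-marginal fails
      have marg_meas : Measurable fun x : X => ∫ z, ht (x, z) :=
        (StronglyMeasurable.integral_prod_right' ht_meas.stronglyMeasurable).measurable
      have marg_int : Integrable fun x : X => ∫ z, ht (x, z) :=
        ht_int_prod.integral_prod_left
      set d : X → ℝ := fun x => (∫ z, ht (x, z)) - f x with hddef
      have d_meas : Measurable d := marg_meas.sub f_meas
      have d_int : Integrable d := marg_int.sub f_int
      have dne : ¬ d =ᵐ[volume] 0 := by
        intro hcontra
        exact hx (by filter_upwards [hcontra] with x h0; exact sub_eq_zero.1 h0)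
      set ρ : ℝ := ∫ x, |d x| with hρdef
      have ρ_pos : 0 < ρ := by
        rcases lt_or_eq_of_le (integral_nonneg (f := fun x => |d x|) (fun x => abs_nonneg (d x))) with h | h
        · exact h
        · exfalso
          apply dne
          have := (integral_eq_zero_iff_of_nonneg (fun x => abs_nonneg (d x)) d_int.abs).1 h.symm
          filter_upwards [this] with x hz
          simpa using hz
      set u : X → ℝ := fun x => if 0 < d x then 1 else if d x < 0 then -1 else 0 with hudef
      have u_meas : Measurable u :=
        Measurable.ite (measurableSet_lt measurable_const d_meas) measurable_const
          (Measurable.ite (measurableSet_lt d_meas measurable_const) measurable_const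
            measurable_const)
      have u_bd : ∀ x, |u x| ≤ 1 := by
        intro x; rw [hudef]
        by_cases h1 : 0 < d x
        · simp [h1]
        · by_cases h2 : d x < 0 <;> simp [h1, h2]
      have ud : ∀ x, u x * d x = |d x| := by
        intro x; rw [hudef]
        by_cases h1 : 0 < d x
        · simp [h1, abs_of_pos h1]
        · by_cases h2 : d x < 0
          · simp [h1, h2, abs_of_neg h2]
          · have : d x = 0 := le_antisymm (not_lt.1 h1) (not_lt.1 h2)
            simp [h1, h2, this]
      set A : ℝ := ∫ p : X × Y, c' p * ht p with hAdef
      set T : ℝ := (γ + 1 - A) / ρ with hTdef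
      set uT : X → ℝ := fun x => T * u x with huTdef
      have uT_meas : Measurable uT := measurable_const.mul u_meas
      have uT_bd : ∀ x, |uT x| ≤ |T| := fun x => by
        rw [huTdef, abs_mul]
        calc |T| * |u x| ≤ |T| * 1 := mul_le_mul_of_nonneg_left (u_bd x) (abs_nonneg T)
          _ = |T| := mul_one _
      have uTht_int : Integrable (fun p : X × Y => uT p.1 * ht p) :=
        integrable_fst_mul_of_bdd uT_meas |T| uT_bd ht_int
      set yT : YT := ⟨(uT, (fun _ => 0)), uT_meas, measurable_const,
        ⟨|T|, uT_bd⟩, ⟨0, fun z => by simp⟩⟩ with hyT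
      refine ⟨yT, ?_⟩
      have heval : L ℓ yT = (∫ p : X × Y, (c' p + uT p.1 + (0:ℝ)) * ht p)
          - (∫ x, uT x * f x) - (∫ z, (0:ℝ) * g z) := by
        show ℓ (vec yT) - _ - _ = _
        rw [ht_eval _ (mem_vec yT)]
      have expand : (fun p : X × Y => (c' p + uT p.1 + (0:ℝ)) * ht p)
          = fun p : X × Y => c' p * ht p + uT p.1 * ht p := by
        funext p; ring
      have e1 : ∫ p : X × Y, (c' p + uT p.1 + (0:ℝ)) * ht p
          = A + ∫ p : X × Y, uT p.1 * ht p := by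
        rw [expand, integral_add c'ht_int uTht_int]
      have e2 : (∫ p : X × Y, uT p.1 * ht p) = ∫ x, uT x * ∫ z, ht (x, z) :=
        integral_fst_mul uTht_int
      have uTmarg_int : Integrable fun x => uT x * ∫ z, ht (x, z) :=
        marg_int.bdd_mul uT_meas.aestronglyMeasurable
          (c := |T|) (Filter.Eventually.of_forall fun x => by simpa [Real.norm_eq_abs] using uT_bd x)
      have uTf_int : Integrable fun x => uT x * f x :=
        f_int.bdd_mul uT_meas.aestronglyMeasurable
          (c := |T|) (Filter.Eventually.of_forall fun x => by simpa [Real.norm_eq_abs] using uT_bd x)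
      have e3 : (∫ x, uT x * ∫ z, ht (x, z)) - (∫ x, uT x * f x) = T * ρ := by
        rw [← integral_sub uTmarg_int uTf_int]
        have h4 : (fun x => uT x * (∫ z, ht (x, z)) - uT x * f x)
            = fun x => T * (u x * d x) := by
          funext x; rw [huTdef, hddef]; ring
        rw [h4]
        have h5 : (fun x => T * (u x * d x)) = fun x => T * |d x| := by
          funext x; rw [ud x]
        rw [h5, integral_const_mul, ← hρdef]
      have eT : T * ρ = γ + 1 - A := div_mul_cancel₀ _ (ne_of_gt ρ_pos)
      have z1 : (∫ z, (0:ℝ) * g z) = 0 := by simp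
      rw [heval, e1, z1, e2]
      linarith [e3, eT]
  -- finite subcover
  have O_open : ∀ y : YT, IsOpen {ℓ : WeakDual ℝ (Lp ℝ 2 μ) | γ < L ℓ y} := by
    intro y
    have hcont : Continuous fun ℓ : WeakDual ℝ (Lp ℝ 2 μ) => L ℓ y :=
      ((WeakDual.eval_continuous (vec y)).sub continuous_const).sub continuous_const
    exact isOpen_lt continuous_const hcont
  obtain ⟨t, ht_cover⟩ := X'_cpt.elim_finite_subcover (fun y : YT => {ℓ | γ < L ℓ y})
    O_open (fun ℓ hℓ => by
      obtain ⟨y, hy⟩ := cover ℓ hℓ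
      exact Set.mem_iUnion.2 ⟨y, hy⟩)
  set Φ : WeakDual ℝ (Lp ℝ 2 μ) → (↥t → ℝ) := fun ℓ i => L ℓ i.1 with hΦ
  have X'_convex : Convex ℝ X' := by
    intro ℓ1 h1 ℓ2 h2 a b ha hb hab
    constructor
    · show ‖WeakDual.toStrongDual (a • ℓ1 + b • ℓ2)‖ ≤ R
      have e : WeakDual.toStrongDual (a • ℓ1 + b • ℓ2)
          = a • WeakDual.toStrongDual ℓ1 + b • WeakDual.toStrongDual ℓ2 := rfl
      rw [e]
      calc ‖a • WeakDual.toStrongDual ℓ1 + b • WeakDual.toStrongDual ℓ2‖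
          ≤ ‖a • WeakDual.toStrongDual ℓ1‖ + ‖b • WeakDual.toStrongDual ℓ2‖ := norm_add_le _ _
        _ = a * ‖WeakDual.toStrongDual ℓ1‖ + b * ‖WeakDual.toStrongDual ℓ2‖ := by
            rw [norm_smul, norm_smul, Real.norm_eq_abs, Real.norm_eq_abs,
              abs_of_nonneg ha, abs_of_nonneg hb]
        _ ≤ a * R + b * R := add_le_add (mul_le_mul_of_nonneg_left h1.1 ha)
            (mul_le_mul_of_nonneg_left h2.1 hb)
        _ = R := by rw [← add_mul, hab, one_mul]
    · refine Set.mem_iInter₂.2 fun G hG => ?_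
      have e : (a • ℓ1 + b • ℓ2) G = a * ℓ1 G + b * ℓ2 G := rfl
      have c1 := X'_cond ℓ1 h1 G hG
      have c2 := X'_cond ℓ2 h2 G hG
      refine Set.mem_setOf.2 ⟨?_, ?_⟩
      · rw [e]; exact add_nonneg (mul_nonneg ha c1.1) (mul_nonneg hb c2.1)
      · rw [e]
        calc a * ℓ1 G + b * ℓ2 G
            ≤ a * (inner ℝ hbarL G : ℝ) + b * (inner ℝ hbarL G : ℝ) :=
              add_le_add (mul_le_mul_of_nonneg_left c1.2 ha)
                (mul_le_mul_of_nonneg_left c2.2 hb)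
          _ = (inner ℝ hbarL G : ℝ) := by rw [← add_mul, hab, one_mul]
  have C_convex : Convex ℝ (Φ '' X') := by
    rintro p1 ⟨ℓ1, h1, rfl⟩ p2 ⟨ℓ2, h2, rfl⟩ a b ha hb hab
    refine ⟨a • ℓ1 + b • ℓ2, X'_convex h1 h2 ha hb hab, ?_⟩
    funext i
    show L (a • ℓ1 + b • ℓ2) i.1 = a * L ℓ1 i.1 + b * L ℓ2 i.1
    have e : (a • ℓ1 + b • ℓ2) (vec i.1) = a * ℓ1 (vec i.1) + b * ℓ2 (vec i.1) := rfl
    show (a • ℓ1 + b • ℓ2) (vec i.1) - _ - _ = _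
    rw [e, show b = 1 - a from by linarith]
    ring
  set D : Set (↥t → ℝ) := {z | ∀ i, z i ≤ γ} with hD
  have D_closed : IsClosed D := by
    have e : D = ⋂ i, {z : ↥t → ℝ | z i ≤ γ} := by
      ext z; simp [hD, Set.mem_iInter]
    rw [e]
    exact isClosed_iInter fun i => isClosed_le (continuous_apply i) continuous_const
  have D_convex : Convex ℝ D := by
    intro z1 h1 z2 h2 a b ha hb hab
    intro i
    show a * z1 i + b * z2 i ≤ γ
    calc a * z1 i + b * z2 i ≤ a * γ + b * γ :=
        add_le_add (mul_le_mul_of_nonneg_left (h1 i) ha) (mul_le_mul_of_nonneg_left (h2 i) hb)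
      _ = γ := by rw [← add_mul, hab, one_mul]
  have disj : Disjoint (Φ '' X') D := by
    rw [Set.disjoint_left]
    rintro p ⟨ℓ, hℓ, rfl⟩ hpD
    rcases Set.mem_iUnion₂.1 (ht_cover hℓ) with ⟨y, hyt, hy⟩
    exact absurd (hpD ⟨y, hyt⟩) (not_le.2 hy)
  have C_cpt : IsCompact (Φ '' X') := X'_cpt.image (continuous_pi fun i =>
    ((WeakDual.eval_continuous (vec i.1)).sub continuous_const).sub continuous_const)
  obtain ⟨F, a, b, hCa, hab, hDb⟩ :=
    geometric_hahn_banach_compact_closed C_convex C_cpt D_convex D_closed disj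
  set bas : ↥t → (↥t → ℝ) := fun i => Pi.single i 1 with hbas
  set lam : ↥t → ℝ := fun i => F (bas i) with hlam
  have Frep : ∀ z : ↥t → ℝ, F z = ∑ i, z i * lam i := by
    intro z
    have hz : z = ∑ i : ↥t, z i • bas i := by
      conv_lhs => rw [← Finset.univ_sum_single z]
      refine Finset.sum_congr rfl fun i _ => ?_
      show (Pi.single i (z i) : ↥t → ℝ) = z i • (Pi.single i 1 : ↥t → ℝ)
      rw [← Pi.single_smul, smul_eq_mul, mul_one]
    calc F z = F (∑ i : ↥t, z i • bas i) := by rw [← hz]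
      _ = ∑ i : ↥t, z i * F (bas i) := by
          rw [map_sum]
          exact Finset.sum_congr rfl fun i _ => by
            rw [_root_.map_smul, smul_eq_mul]
  have hγ1D : (fun _ : ↥t => γ) ∈ D := fun i => le_refl γ
  have hFγb : b < F (fun _ => γ) := hDb _ hγ1D
  have lam_nonpos : ∀ i, lam i ≤ 0 := by
    intro i
    by_contra hpos
    push_neg at hpos
    set r : ℝ := (F (fun _ => γ) - b) / lam i + 1 with hr
    have hr0 : 0 ≤ r := by
      have hA : 0 ≤ (F (fun _ => γ) - b) / lam i := div_nonneg (by linarith) (le_of_lt hpos)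
      rw [hr]
      linarith
    set ei : ↥t → ℝ := bas i with hei
    have hzD : ((fun _ : ↥t => γ) - r • ei) ∈ D := by
      intro j
      have h1 : (0:ℝ) ≤ (r • ei) j := by
        rcases eq_or_ne j i with h | h
        · subst h
          have : ei j = 1 := by rw [hei, hbas]; simp
          show 0 ≤ r * ei j
          rw [this, mul_one]; exact hr0
        · have : ei j = 0 := by rw [hei, hbas]; simp [Pi.single_apply, h]
          show 0 ≤ r * ei j
          rw [this, mul_zero]
      have e0 : ((fun _ : ↥t => γ) - r • ei) j = γ - (r • ei) j := rfl
      rw [e0]; linarith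
    have hineq := hDb _ hzD
    rw [map_sub, _root_.map_smul, smul_eq_mul] at hineq
    rw [show F ei = lam i from by rw [hei]] at hineq
    have hrl : r * lam i = (F (fun _ => γ) - b) + lam i := by
      rw [hr]; field_simp
    rw [hrl] at hineq
    linarith
  set Tsum : ℝ := ∑ i, (-lam i) with hTsum
  have Tsum_nonneg : 0 ≤ Tsum := Finset.sum_nonneg fun i _ => by linarith [lam_nonpos i]
  have Tsum_pos : 0 < Tsum := by
    rcases lt_or_eq_of_le Tsum_nonneg with h | h
    · exact h
    · exfalso
      have hall : ∀ i ∈ Finset.univ, -lam i = 0 :=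
        (Finset.sum_eq_zero_iff_of_nonneg fun i _ => by linarith [lam_nonpos i]).1 h.symm
      have hF0 : ∀ z, F z = 0 := by
        intro z
        rw [Frep]
        refine Finset.sum_eq_zero fun i _ => ?_
        have := hall i (Finset.mem_univ i)
        have : lam i = 0 := by linarith
        rw [this, mul_zero]
      have h1 : F (Φ 0) < a := hCa _ ⟨0, zero_mem, rfl⟩
      rw [hF0] at h1
      have h2 := hFγb
      rw [hF0] at h2
      linarith
  set pr : ↥t → ℝ := fun i => (-lam i) / Tsum with hpr
  have pr_nonneg : ∀ i, 0 ≤ pr i := fun i =>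
    div_nonneg (by linarith [lam_nonpos i]) (le_of_lt Tsum_pos)
  have pr_sum : ∑ i, pr i = 1 := by
    show ∑ i : ↥t, (-lam i) / Tsum = 1
    rw [← Finset.sum_div, ← hTsum, div_self (ne_of_gt Tsum_pos)]
  have key : ∀ ℓ ∈ X', γ < ∑ i, pr i * L ℓ i.1 := by
    intro ℓ hℓ
    have h1 : F (Φ ℓ) < a := hCa _ ⟨ℓ, hℓ, rfl⟩
    rw [Frep] at h1
    have h2 := hFγb
    rw [Frep] at h2
    have h1' : (∑ i, L ℓ i.1 * lam i) < a := h1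
    have h2' : b < ∑ i : ↥t, γ * lam i := h2
    have hsum : (∑ i, L ℓ i.1 * lam i) < ∑ i : ↥t, γ * lam i := by linarith
    have expand : ∑ i, pr i * L ℓ i.1 = (∑ i, (-lam i) * L ℓ i.1) / Tsum := by
      rw [Finset.sum_div]
      exact Finset.sum_congr rfl fun i _ => by
        show ((-lam i) / Tsum) * L ℓ i.1 = (-lam i) * L ℓ i.1 / Tsum
        rw [div_mul_eq_mul_div]
    rw [expand, lt_div_iff₀ Tsum_pos]
    have e1 : γ * Tsum = ∑ i : ↥t, γ * (-lam i) := by rw [hTsum, Finset.mul_sum]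
    have e2 : ∑ i, -lam i * L ℓ i.1 = -(∑ i, L ℓ i.1 * lam i) := by
      rw [← Finset.sum_neg_distrib]
      exact Finset.sum_congr rfl fun i _ => by ring
    have e3 : ∑ i : ↥t, γ * (-lam i) = -(∑ i : ↥t, γ * lam i) := by
      rw [← Finset.sum_neg_distrib]
      exact Finset.sum_congr rfl fun i _ => by ring
    rw [e1, e2, e3]
    linarith
  -- mixed multiplier
  have hBu : ∀ i : ↥t, ∃ B, ∀ x, |(i.1.1.1) x| ≤ B := fun i => i.1.2.2.2.1
  have hBv : ∀ i : ↥t, ∃ B, ∀ z, |(i.1.1.2) z| ≤ B := fun i => i.1.2.2.2.2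
  choose Bu hBu' using hBu
  choose Bv hBv' using hBv
  have pr_le_one : ∀ i, pr i ≤ 1 := fun i => by
    rw [← pr_sum]
    exact Finset.single_le_sum (fun j _ => pr_nonneg j) (Finset.mem_univ i)
  set uS : X → ℝ := fun x => ∑ i : ↥t, pr i * (i.1.1.1 x) with huS
  set vS : Y → ℝ := fun z => ∑ i : ↥t, pr i * (i.1.1.2 z) with hvS
  have uS_meas : Measurable uS :=
    Finset.measurable_sum _ (fun i _ => (i.1.2.1).const_mul (pr i))
  have vS_meas : Measurable vS :=
    Finset.measurable_sum _ (fun i _ => (i.1.2.2.1).const_mul (pr i))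
  have uS_bd : ∀ x, |uS x| ≤ ∑ i : ↥t, |Bu i| := by
    intro x
    refine le_trans (Finset.abs_sum_le_sum_abs _ _) (Finset.sum_le_sum fun i _ => ?_)
    rw [abs_mul]
    calc |pr i| * |i.1.1.1 x| ≤ 1 * |Bu i| :=
        mul_le_mul (by rw [abs_of_nonneg (pr_nonneg i)]; exact pr_le_one i)
          (le_trans (hBu' i x) (le_abs_self _)) (abs_nonneg _) zero_le_one
      _ = |Bu i| := one_mul _
  have vS_bd : ∀ z, |vS z| ≤ ∑ i : ↥t, |Bv i| := by
    intro z
    refine le_trans (Finset.abs_sum_le_sum_abs _ _) (Finset.sum_le_sum fun i _ => ?_)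
    rw [abs_mul]
    calc |pr i| * |i.1.1.2 z| ≤ 1 * |Bv i| :=
        mul_le_mul (by rw [abs_of_nonneg (pr_nonneg i)]; exact pr_le_one i)
          (le_trans (hBv' i z) (le_abs_self _)) (abs_nonneg _) zero_le_one
      _ = |Bv i| := one_mul _
  set sfn : X × Y → ℝ := fun p => c' p + uS p.1 + vS p.2 with hsfn
  have sfn_meas : Measurable sfn :=
    (hc'.add (uS_meas.comp measurable_fst)).add (vS_meas.comp measurable_snd)
  set hstar : X × Y → ℝ := fun p => if sfn p < 0 then hbar p else 0 with hhstar
  have hstar_meas : Measurable hstar :=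
    Measurable.ite (measurableSet_lt sfn_meas measurable_const) hbar_meas measurable_const
  have hstar_bds : ∀ p, 0 ≤ hstar p ∧ hstar p ≤ hbar p := fun p => by
    rw [hhstar]
    by_cases hp : sfn p < 0 <;> simp [hp, hbar_nonneg p]
  have habs_star : ∀ p, |hstar p| ≤ C₀ := fun p => by
    rw [abs_of_nonneg (hstar_bds p).1]
    exact le_trans (hstar_bds p).2 (hbar_le p)
  have hC₀p : ∀ _p : X × Y, (0:ℝ) ≤ C₀ := fun p => le_trans (abs_nonneg _) (habs_star p)
  have mem_hstar : MemLp hstar 2 μ := memB _ hstar_meas C₀ habs_star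
  have int_bdd : ∀ (W : X × Y → ℝ), Measurable W → ∀ B : ℝ, (∀ p, |W p| ≤ B) →
      Integrable W μ := fun W hW B hB => (memB W hW B hB).integrable (by norm_num)
  set ℓs : WeakDual ℝ (Lp ℝ 2 μ) := StrongDual.toWeakDual
    (InnerProductSpace.toDual ℝ (Lp ℝ 2 μ) (mem_hstar.toLp hstar)) with hℓs
  have ℓs_evalG : ∀ G : Lp ℝ 2 μ, ℓs G = ∫ p, hstar p * G p ∂μ := by
    intro G
    have e : ℓs G = (inner ℝ (mem_hstar.toLp hstar) G : ℝ) := InnerProductSpace.toDual_apply_apply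
    rw [e, inner_eval]
    refine integral_congr_ae ?_
    filter_upwards [mem_hstar.coeFn_toLp] with p hp
    rw [hp]
  have int_mul : ∀ (W : X × Y → ℝ) (hW : MemLp W 2 μ) (G : Lp ℝ 2 μ),
      Integrable (fun p => W p * G p) μ := by
    intro W hW G
    have h0 : Integrable
        (fun p => (inner ℝ (((hW.toLp W) : Lp ℝ 2 μ) p) ((G : X × Y → ℝ) p) : ℝ)) μ :=
      L2.integrable_inner (𝕜 := ℝ) (hW.toLp W) G
    refine h0.congr ?_
    filter_upwards [hW.coeFn_toLp] with p hp
    rw [RCLike.inner_apply', starRingEnd_apply, star_trivial, hp]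
  have ℓs_mem : ℓs ∈ X' := by
    constructor
    · show ‖WeakDual.toStrongDual ℓs‖ ≤ R
      have e1 : ‖WeakDual.toStrongDual ℓs‖ = ‖mem_hstar.toLp hstar‖ :=
        (InnerProductSpace.toDual ℝ (Lp ℝ 2 μ)).norm_map _
      rw [e1, hRdef, hbarLdef]
      rw [Lp.norm_def, Lp.norm_def]
      have e2 : eLpNorm ((mem_hstar.toLp hstar : Lp ℝ 2 μ) : X × Y → ℝ) 2 μ
          = eLpNorm hstar 2 μ := eLpNorm_congr_ae mem_hstar.coeFn_toLp
      have e3 : eLpNorm ((MemLp.toLp hbar mem_hbar : Lp ℝ 2 μ) : X × Y → ℝ) 2 μ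
          = eLpNorm hbar 2 μ := eLpNorm_congr_ae mem_hbar.coeFn_toLp
      rw [e2, e3]
      refine ENNReal.toReal_mono mem_hbar.2.ne ?_
      refine eLpNorm_mono_ae (Filter.Eventually.of_forall fun p => ?_)
      rw [Real.norm_eq_abs, Real.norm_eq_abs, abs_of_nonneg (hstar_bds p).1,
        abs_of_nonneg (hbar_nonneg p)]
      exact (hstar_bds p).2
    · refine Set.mem_iInter₂.2 fun G hG => ?_
      refine Set.mem_setOf.2 ⟨?_, ?_⟩
      · rw [ℓs_evalG]
        refine integral_nonneg_of_ae ?_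
        filter_upwards [hG] with p hp
        exact mul_nonneg (hstar_bds p).1 hp
      · rw [ℓs_evalG, inner_eval]
        have i2 : Integrable (fun p => (hbarL : X × Y → ℝ) p * G p) μ := by
          refine (int_mul hbar mem_hbar G).congr ?_
          filter_upwards [mem_hbar.coeFn_toLp] with p hp
          rw [hp]
        refine integral_mono_ae (int_mul hstar mem_hstar G) i2 ?_
        filter_upwards [hG, mem_hbar.coeFn_toLp] with p hp hp2
        rw [hp2]
        exact mul_le_mul_of_nonneg_right (hstar_bds p).2 hp
  have hkey := key ℓs ℓs_mem
  -- integrability of pieces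
  have int_sc : Integrable (fun p => hstar p * c' p) μ :=
    int_bdd _ (hstar_meas.mul hc') (C₀ * B') (fun p => by
      rw [abs_mul]; exact mul_le_mul (habs_star p) (hc'b p) (abs_nonneg _) (hC₀p p))
  have int_u : ∀ i : ↥t, Integrable (fun p : X × Y => hstar p * (i.1.1.1 p.1)) μ := by
    intro i
    exact int_bdd _ (hstar_meas.mul ((i.1.2.1).comp measurable_fst)) (C₀ * Bu i) (fun p => by
      rw [abs_mul]; exact mul_le_mul (habs_star p) (hBu' i p.1) (abs_nonneg _) (hC₀p p))
  have int_v : ∀ i : ↥t, Integrable (fun p : X × Y => hstar p * (i.1.1.2 p.2)) μ := by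
    intro i
    exact int_bdd _ (hstar_meas.mul ((i.1.2.2.1).comp measurable_snd)) (C₀ * Bv i) (fun p => by
      rw [abs_mul]; exact mul_le_mul (habs_star p) (hBv' i p.2) (abs_nonneg _) (hC₀p p))
  have int_uf : ∀ i : ↥t, Integrable (fun x => (i.1.1.1) x * f x) := fun i =>
    f_int.bdd_mul (i.1.2.1).aestronglyMeasurable
      (c := Bu i) (Filter.Eventually.of_forall fun x => by simpa [Real.norm_eq_abs] using hBu' i x)
  have int_vg : ∀ i : ↥t, Integrable (fun z => (i.1.1.2) z * g z) := fun i =>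
    g_int.bdd_mul (i.1.2.2.1).aestronglyMeasurable
      (c := Bv i) (Filter.Eventually.of_forall fun z => by simpa [Real.norm_eq_abs] using hBv' i z)
  have int_su : Integrable (fun p : X × Y => hstar p * uS p.1) μ :=
    int_bdd _ (hstar_meas.mul (uS_meas.comp measurable_fst)) (C₀ * ∑ i : ↥t, |Bu i|)
      (fun p => by
        rw [abs_mul]; exact mul_le_mul (habs_star p) (uS_bd p.1) (abs_nonneg _) (hC₀p p))
  have int_sv : Integrable (fun p : X × Y => hstar p * vS p.2) μ :=
    int_bdd _ (hstar_meas.mul (vS_meas.comp measurable_snd)) (C₀ * ∑ i : ↥t, |Bv i|)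
      (fun p => by
        rw [abs_mul]; exact mul_le_mul (habs_star p) (vS_bd p.2) (abs_nonneg _) (hC₀p p))
  -- evaluate each L ℓs i
  have ev_i : ∀ i : ↥t, L ℓs i.1
      = (∫ p, hstar p * c' p ∂μ) + (∫ p, hstar p * (i.1.1.1 p.1) ∂μ)
        + (∫ p, hstar p * (i.1.1.2 p.2) ∂μ)
        - (∫ x, (i.1.1.1) x * f x) - (∫ z, (i.1.1.2) z * g z) := by
    intro i
    have e0 : L ℓs i.1 = ℓs (vec i.1) - (∫ x, (i.1.1.1) x * f x)
        - (∫ z, (i.1.1.2) z * g z) := rfl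
    rw [e0, ℓs_evalG (vec i.1)]
    have e1 : ∫ p, hstar p * (vec i.1) p ∂μ
        = ∫ p, hstar p * (c' p + i.1.1.1 p.1 + i.1.1.2 p.2) ∂μ :=
      integral_congr_ae (by
        filter_upwards [(mem_vec i.1).coeFn_toLp] with p hp
        rw [hp])
    rw [e1]
    have expand : (fun p : X × Y => hstar p * (c' p + i.1.1.1 p.1 + i.1.1.2 p.2))
        = fun p : X × Y => (hstar p * c' p + hstar p * (i.1.1.1 p.1))
            + hstar p * (i.1.1.2 p.2) := by
      funext p; ring
    have isum : Integrable (fun p : X × Y => hstar p * c' p + hstar p * (i.1.1.1 p.1)) μ :=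
      int_sc.add (int_u i)
    rw [expand, integral_add isum (int_v i), integral_add int_sc (int_u i)]
  have sum_split : ∑ i, pr i * L ℓs i.1
      = (∑ i : ↥t, pr i * (∫ p, hstar p * c' p ∂μ))
        + (∑ i : ↥t, pr i * (∫ p, hstar p * (i.1.1.1 p.1) ∂μ))
        + (∑ i : ↥t, pr i * (∫ p, hstar p * (i.1.1.2 p.2) ∂μ))
        - (∑ i : ↥t, pr i * (∫ x, (i.1.1.1) x * f x))
        - (∑ i : ↥t, pr i * (∫ z, (i.1.1.2) z * g z)) := by
    rw [← Finset.sum_add_distrib, ← Finset.sum_add_distrib, ← Finset.sum_sub_distrib,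
      ← Finset.sum_sub_distrib]
    exact Finset.sum_congr rfl fun i _ => by rw [ev_i i]; ring
  have s1 : ∑ i : ↥t, pr i * (∫ p, hstar p * c' p ∂μ) = ∫ p, hstar p * c' p ∂μ := by
    rw [← Finset.sum_mul, pr_sum, one_mul]
  have s2 : ∑ i : ↥t, pr i * (∫ p, hstar p * (i.1.1.1 p.1) ∂μ)
      = ∫ p, hstar p * uS p.1 ∂μ := by
    rw [finsum_integral Finset.univ pr (fun i (p : X × Y) => hstar p * (i.1.1.1 p.1))
      (fun i _ => int_u i)]
    refine integral_congr_ae (Filter.Eventually.of_forall fun p => ?_)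
    show ∑ i : ↥t, pr i * (hstar p * (i.1.1.1 p.1))
        = hstar p * ∑ i : ↥t, pr i * (i.1.1.1 p.1)
    rw [Finset.mul_sum]
    exact Finset.sum_congr rfl fun i _ => by ring
  have s3 : ∑ i : ↥t, pr i * (∫ p, hstar p * (i.1.1.2 p.2) ∂μ)
      = ∫ p, hstar p * vS p.2 ∂μ := by
    rw [finsum_integral Finset.univ pr (fun i (p : X × Y) => hstar p * (i.1.1.2 p.2))
      (fun i _ => int_v i)]
    refine integral_congr_ae (Filter.Eventually.of_forall fun p => ?_)
    show ∑ i : ↥t, pr i * (hstar p * (i.1.1.2 p.2))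
        = hstar p * ∑ i : ↥t, pr i * (i.1.1.2 p.2)
    rw [Finset.mul_sum]
    exact Finset.sum_congr rfl fun i _ => by ring
  have s4 : ∑ i : ↥t, pr i * (∫ x, (i.1.1.1) x * f x) = ∫ x, uS x * f x := by
    rw [finsum_integral Finset.univ pr (fun i x => (i.1.1.1) x * f x) (fun i _ => int_uf i)]
    refine integral_congr_ae (Filter.Eventually.of_forall fun x => ?_)
    show ∑ i : ↥t, pr i * ((i.1.1.1) x * f x) = (∑ i : ↥t, pr i * (i.1.1.1 x)) * f x
    rw [Finset.sum_mul]
    exact Finset.sum_congr rfl fun i _ => by ring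
  have s5 : ∑ i : ↥t, pr i * (∫ z, (i.1.1.2) z * g z) = ∫ z, vS z * g z := by
    rw [finsum_integral Finset.univ pr (fun i z => (i.1.1.2) z * g z) (fun i _ => int_vg i)]
    refine integral_congr_ae (Filter.Eventually.of_forall fun z => ?_)
    show ∑ i : ↥t, pr i * ((i.1.1.2) z * g z) = (∑ i : ↥t, pr i * (i.1.1.2 z)) * g z
    rw [Finset.sum_mul]
    exact Finset.sum_congr rfl fun i _ => by ring
  have merge : (∫ p, hstar p * c' p ∂μ) + (∫ p, hstar p * uS p.1 ∂μ)
      + (∫ p, hstar p * vS p.2 ∂μ) = ∫ p, min (sfn p) 0 * hbar p ∂μ := by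
    have int_scu : Integrable (fun p : X × Y => hstar p * c' p + hstar p * uS p.1) μ :=
      int_sc.add int_su
    rw [← integral_add int_sc int_su, ← integral_add int_scu int_sv]
    refine integral_congr_ae (Filter.Eventually.of_forall fun p => ?_)
    show hstar p * c' p + hstar p * uS p.1 + hstar p * vS p.2 = min (sfn p) 0 * hbar p
    have e : hstar p * c' p + hstar p * uS p.1 + hstar p * vS p.2 = hstar p * sfn p := by
      show _ = hstar p * (c' p + uS p.1 + vS p.2)
      ring
    rw [e]
    by_cases hp : sfn p < 0
    · show (if sfn p < 0 then hbar p else 0) * sfn p = _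
      rw [if_pos hp, min_eq_left (le_of_lt hp)]
      ring
    · show (if sfn p < 0 then hbar p else 0) * sfn p = _
      rw [if_neg hp, min_eq_right (not_lt.1 hp)]
      ring
  have glob : ∫ p, min (sfn p) 0 * hbar p ∂μ = ∫ p, min (sfn p) 0 * hbar p := by
    have hfun : (fun p : X × Y => min (sfn p) 0 * hbar p)
        = K.indicator (fun p => min (sfn p) 0 * hbar p) := by
      funext p
      by_cases hp : p ∈ K
      · rw [Set.indicator_of_mem hp]
      · rw [Set.indicator_of_notMem hp, hKsupp p hp, mul_zero]
    conv_rhs => rw [hfun]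
    rw [integral_indicator hK]
  refine ⟨uS, vS, uS_meas, vS_meas, ⟨∑ i : ↥t, |Bu i|, uS_bd⟩, ⟨∑ i : ↥t, |Bv i|, vS_bd⟩, ?_⟩
  show γ < -(∫ x, uS x * f x) - (∫ z, vS z * g z) + ∫ p, min (sfn p) 0 * hbar p
  rw [sum_split, s1, s2, s3, s4, s5] at hkey
  linarith [hkey, merge, glob]

end LevinAux


set_option maxHeartbeats 1000000 in
/-- Levin's duality: the minimum of `∬ c h` over `h ∈ Γ^{h̄}(f,g)`
(attained at `h₀`) equals the supremum of `J(u,v,w) = −∫uf − ∫vg + ∬wh̄` over triples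
`(u,v,w)` with `u ∈ L¹(f dx)`, `v ∈ L¹(g dy)`, `w ∈ L¹(h̄ dxdy)`,
`u(x)+v(y)−w(x,y)+c(x,y) ≥ 0` and `w ≤ 0`. -/
theorem levin_duality (m n : ℕ)
    (hbar c : (Fin m → ℝ) × (Fin n → ℝ) → ℝ)
    (f : (Fin m → ℝ) → ℝ) (g : (Fin n → ℝ) → ℝ)
    (hbar_meas : Measurable hbar) (hbar_nonneg : ∀ p, 0 ≤ hbar p)
    (hbar_bdd : ∃ C, ∀ p, hbar p ≤ C) (hbar_supp : HasCompactSupport hbar)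
    (f_meas : Measurable f) (f_nonneg : ∀ x, 0 ≤ f x)
    (f_int : Integrable f) (f_mass : ∫ x, f x = 1)
    (g_meas : Measurable g) (g_nonneg : ∀ y, 0 ≤ g y)
    (g_int : Integrable g) (g_mass : ∫ y, g y = 1)
    (c_locint : LocallyIntegrable c)
    (h₀ : (Fin m → ℝ) × (Fin n → ℝ) → ℝ) (h₀_meas : Measurable h₀)
    (h₀_bds : ∀ᵐ p, 0 ≤ h₀ p ∧ h₀ p ≤ hbar p)
    (h₀_margx : ∀ᵐ x, (∫ y, h₀ (x, y)) = f x)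
    (h₀_margy : ∀ᵐ y, (∫ x, h₀ (x, y)) = g y)
    (h₀_min : ∀ h : (Fin m → ℝ) × (Fin n → ℝ) → ℝ, Measurable h →
      (∀ᵐ p, 0 ≤ h p ∧ h p ≤ hbar p) →
      (∀ᵐ x, (∫ y, h (x, y)) = f x) → (∀ᵐ y, (∫ x, h (x, y)) = g y) →
      (∫ p, c p * h₀ p) ≤ ∫ p, c p * h p) :
    (∫ p, c p * h₀ p) =
      sSup {r : ℝ | ∃ (u : (Fin m → ℝ) → ℝ) (v : (Fin n → ℝ) → ℝ)
          (w : (Fin m → ℝ) × (Fin n → ℝ) → ℝ),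
        Measurable u ∧ Measurable v ∧ Measurable w ∧
        Integrable (fun x => u x * f x) ∧ Integrable (fun y => v y * g y) ∧
        Integrable (fun p => w p * hbar p) ∧
        (∀ᵐ p : (Fin m → ℝ) × (Fin n → ℝ), 0 ≤ u p.1 + v p.2 - w p + c p) ∧
        (∀ᵐ p : (Fin m → ℝ) × (Fin n → ℝ), w p ≤ 0) ∧
        r = -(∫ x, u x * f x) - (∫ y, v y * g y) + (∫ p, w p * hbar p)} := by
  classical
  obtain ⟨C₀, hC₀⟩ := hbar_bdd
  set S : Set ℝ := {r : ℝ | ∃ (u : (Fin m → ℝ) → ℝ) (v : (Fin n → ℝ) → ℝ)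
      (w : (Fin m → ℝ) × (Fin n → ℝ) → ℝ),
    Measurable u ∧ Measurable v ∧ Measurable w ∧
    Integrable (fun x => u x * f x) ∧ Integrable (fun y => v y * g y) ∧
    Integrable (fun p => w p * hbar p) ∧
    (∀ᵐ p : (Fin m → ℝ) × (Fin n → ℝ), 0 ≤ u p.1 + v p.2 - w p + c p) ∧
    (∀ᵐ p : (Fin m → ℝ) × (Fin n → ℝ), w p ≤ 0) ∧
    r = -(∫ x, u x * f x) - (∫ y, v y * g y) + (∫ p, w p * hbar p)} with hSdef
  set V : ℝ := ∫ p, c p * h₀ p with hVdef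
  haveI hreg : (volume : Measure ((Fin m → ℝ) × (Fin n → ℝ))).Regular :=
    MeasureTheory.Measure.Regular.of_sigmaCompactSpace_of_isLocallyFiniteMeasure _
  set K : Set ((Fin m → ℝ) × (Fin n → ℝ)) := tsupport hbar with hKdef
  have hK : MeasurableSet K := (isClosed_tsupport hbar).measurableSet
  have hKcpt : IsCompact K := hbar_supp
  have hKfin : volume K ≠ ⊤ := hKcpt.measure_lt_top.ne
  have hKsupp : ∀ p ∉ K, hbar p = 0 := fun p hp => image_eq_zero_of_notMem_tsupport hp
  have hC₀0 : 0 ≤ C₀ := le_trans (hbar_nonneg 0) (hC₀ 0)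
  have ind_int : Integrable (K.indicator fun _ => C₀) :=
    (integrable_indicator_iff hK).2 (integrableOn_const hKfin)
  have hbar_int : Integrable hbar := by
    refine ind_int.mono' hbar_meas.aestronglyMeasurable
      (Filter.Eventually.of_forall fun p => ?_)
    by_cases hp : p ∈ K
    · rw [Set.indicator_of_mem hp, Real.norm_eq_abs, abs_of_nonneg (hbar_nonneg p)]
      exact hC₀ p
    · rw [Set.indicator_of_notMem hp, hKsupp p hp]; simp
  have cK_int : IntegrableOn c K := c_locint.integrableOn_isCompact hKcpt
  have hc_aesm : AEStronglyMeasurable c volume := c_locint.aestronglyMeasurable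
  have idom : Integrable (K.indicator fun p => |c p| * C₀) :=
    (integrable_indicator_iff hK).2 (cK_int.abs.mul_const C₀)
  have hcbar : Integrable (fun p => c p * hbar p) := by
    refine idom.mono' (hc_aesm.mul hbar_meas.aestronglyMeasurable)
      (Filter.Eventually.of_forall fun p => ?_)
    by_cases hp : p ∈ K
    · rw [Set.indicator_of_mem hp, Real.norm_eq_abs, abs_mul]
      exact mul_le_mul_of_nonneg_left
        (by rw [abs_of_nonneg (hbar_nonneg p)]; exact hC₀ p) (abs_nonneg _)
    · rw [Set.indicator_of_notMem hp, hKsupp p hp]; simp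
  have ub : ∀ r ∈ S, r ≤ V := by
    rintro r ⟨u, v, w, hu, hv, hw, huf, hvg, hwh, hcon, hwn, rfl⟩
    exact LevinAux.weak_duality hbar c h₀ f g u v w hbar_int f_nonneg g_nonneg
      hc_aesm hcbar h₀_meas h₀_bds h₀_margx h₀_margy hu hv hw huf hvg hwh hcon hwn
  have strong : ∀ ε : ℝ, 0 < ε → ∃ r ∈ S, V - ε < r := by
    intro ε hε
    set δ : ℝ := ε / (2 * C₀ + 2) with hδ
    have hδpos : 0 < δ := div_pos hε (by linarith)
    have hεδ : ε = (2 * C₀ + 2) * δ := by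
      rw [hδ]; field_simp
    have cK_int' : Integrable (K.indicator c) := (integrable_indicator_iff hK).2 cK_int
    obtain ⟨c', hc'supp, hc'close, hc'cont, hc'int⟩ :=
      cK_int'.exists_hasCompactSupport_integral_sub_le hδpos
    obtain ⟨B', hc'B⟩ : ∃ B', ∀ p, |c' p| ≤ B' := by
      obtain ⟨p0, hp0⟩ := hc'cont.norm.exists_forall_ge_of_hasCompactSupport hc'supp.norm
      exact ⟨‖c' p0‖, fun p => by simpa [Real.norm_eq_abs] using hp0 p⟩
    have diff_int : Integrable (fun p => ‖K.indicator c p - c' p‖ * C₀) :=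
      (cK_int'.sub hc'int).norm.mul_const C₀
    have diff_est : (∫ p, ‖K.indicator c p - c' p‖ * C₀) ≤ C₀ * δ := by
      rw [integral_mul_const]
      calc (∫ p, ‖K.indicator c p - c' p‖) * C₀ ≤ δ * C₀ :=
          mul_le_mul_of_nonneg_right hc'close hC₀0
        _ = C₀ * δ := mul_comm _ _
    set γ : ℝ := V - C₀ * δ - δ with hγ
    have Hfeas : ∀ h : (Fin m → ℝ) × (Fin n → ℝ) → ℝ, Measurable h →
        (∀ᵐ p, 0 ≤ h p ∧ h p ≤ hbar p) →
        (∀ᵐ x, (∫ y, h (x, y)) = f x) → (∀ᵐ y, (∫ x, h (x, y)) = g y) →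
        γ < ∫ p, c' p * h p := by
      intro h h_meas h_bds h_mx h_my
      have h_int : Integrable h := by
        refine ind_int.mono' h_meas.aestronglyMeasurable ?_
        filter_upwards [h_bds] with p hp
        by_cases hpK : p ∈ K
        · rw [Set.indicator_of_mem hpK, Real.norm_eq_abs, abs_of_nonneg hp.1]
          exact le_trans hp.2 (hC₀ p)
        · rw [Set.indicator_of_notMem hpK, Real.norm_eq_abs, abs_of_nonneg hp.1]
          exact le_trans hp.2 (le_of_eq (hKsupp p hpK))
      have hch : Integrable (fun p => c p * h p) := by
        refine idom.mono' (hc_aesm.mul h_meas.aestronglyMeasurable) ?_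
        filter_upwards [h_bds] with p hp
        by_cases hpK : p ∈ K
        · rw [Set.indicator_of_mem hpK, Real.norm_eq_abs, abs_mul]
          exact mul_le_mul_of_nonneg_left
            (by rw [abs_of_nonneg hp.1]; exact le_trans hp.2 (hC₀ p)) (abs_nonneg _)
        · have h0 : h p = 0 := le_antisymm (by rw [← hKsupp p hpK]; exact hp.2) hp.1
          rw [Set.indicator_of_notMem hpK, h0]; simp
      have hc'h : Integrable (fun p => c' p * h p) :=
        h_int.bdd_mul hc'cont.aestronglyMeasurable
          (c := B') (Filter.Eventually.of_forall fun p => by simpa [Real.norm_eq_abs] using hc'B p)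
      have hmin := h₀_min h h_meas h_bds h_mx h_my
      have est : (∫ p, c p * h p) - (∫ p, c' p * h p) ≤ C₀ * δ := by
        rw [← integral_sub hch hc'h]
        refine le_trans (integral_mono_ae (hch.sub hc'h) diff_int ?_) diff_est
        filter_upwards [h_bds] with p hp
        have e : c p * h p - c' p * h p = (c p - c' p) * h p := by ring
        rw [e]
        by_cases hpK : p ∈ K
        · calc (c p - c' p) * h p ≤ |(c p - c' p) * h p| := le_abs_self _
            _ = |c p - c' p| * |h p| := abs_mul _ _
            _ ≤ ‖K.indicator c p - c' p‖ * C₀ := by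
                rw [Set.indicator_of_mem hpK, Real.norm_eq_abs]
                exact mul_le_mul_of_nonneg_left
                  (by rw [abs_of_nonneg hp.1]; exact le_trans hp.2 (hC₀ p)) (abs_nonneg _)
        · have h0 : h p = 0 := le_antisymm (by rw [← hKsupp p hpK]; exact hp.2) hp.1
          rw [h0, mul_zero]
          exact mul_nonneg (norm_nonneg _) hC₀0
      have hVh : V ≤ ∫ p, c p * h p := hmin
      linarith
    obtain ⟨u, v, hu_meas, hv_meas, ⟨Bu, hBu⟩, ⟨Bv, hBv⟩, hdual⟩ :=
      LevinAux.core_duality hbar c' f g K γ C₀ B' hbar_meas hbar_nonneg hC₀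
        hK hKfin hKsupp f_int g_int f_meas g_meas hc'cont.measurable hc'B Hfeas
    have hBu0 : 0 ≤ Bu := le_trans (abs_nonneg _) (hBu 0)
    have hBv0 : 0 ≤ Bv := le_trans (abs_nonneg _) (hBv 0)
    set cm : (Fin m → ℝ) × (Fin n → ℝ) → ℝ := hc_aesm.mk c with hcm
    have cm_meas : Measurable cm := hc_aesm.stronglyMeasurable_mk.measurable
    have cm_ae : c =ᵐ[volume] cm := hc_aesm.ae_eq_mk
    set w : (Fin m → ℝ) × (Fin n → ℝ) → ℝ :=
      fun p => min (cm p + u p.1 + v p.2) 0 with hwdef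
    have w_meas : Measurable w :=
      ((cm_meas.add (hu_meas.comp measurable_fst)).add
        (hv_meas.comp measurable_snd)).min measurable_const
    have huf : Integrable (fun x => u x * f x) :=
      f_int.bdd_mul hu_meas.aestronglyMeasurable
        (c := Bu) (Filter.Eventually.of_forall fun x => by simpa [Real.norm_eq_abs] using hBu x)
    have hvg : Integrable (fun y => v y * g y) :=
      g_int.bdd_mul hv_meas.aestronglyMeasurable
        (c := Bv) (Filter.Eventually.of_forall fun y => by simpa [Real.norm_eq_abs] using hBv y)
    have cmbar_int : Integrable (fun p => cm p * hbar p) :=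
      hcbar.congr (by filter_upwards [cm_ae] with p hp; rw [hp])
    have hwh : Integrable (fun p => w p * hbar p) := by
      have idom2 : Integrable (fun p => |cm p * hbar p| + (Bu + Bv) * hbar p) :=
        cmbar_int.abs.add (hbar_int.const_mul _)
      refine idom2.mono' (w_meas.mul hbar_meas).aestronglyMeasurable
        (Filter.Eventually.of_forall fun p => ?_)
      rw [Real.norm_eq_abs, abs_mul, abs_of_nonneg (hbar_nonneg p)]
      have h1 : |w p| ≤ |cm p| + (Bu + Bv) := by
        have h2 : |w p| ≤ |cm p + u p.1 + v p.2| := by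
          rcases le_or_gt (cm p + u p.1 + v p.2) 0 with h | h
          · have hw : w p = cm p + u p.1 + v p.2 := min_eq_left h
            rw [hw]
          · have hw : w p = 0 := min_eq_right (le_of_lt h)
            rw [hw]; simp [abs_nonneg]
        calc |w p| ≤ |cm p + u p.1 + v p.2| := h2
          _ ≤ |cm p| + |u p.1| + |v p.2| := abs_add_three _ _ _
          _ ≤ |cm p| + Bu + Bv := by
              have := hBu p.1; have := hBv p.2; linarith
          _ = |cm p| + (Bu + Bv) := by ring
      calc |w p| * hbar p ≤ (|cm p| + (Bu + Bv)) * hbar p :=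
          mul_le_mul_of_nonneg_right h1 (hbar_nonneg p)
        _ = |cm p| * hbar p + (Bu + Bv) * hbar p := by ring
        _ = |cm p * hbar p| + (Bu + Bv) * hbar p := by
            rw [abs_mul, abs_of_nonneg (hbar_nonneg p)]
    have hcon : ∀ᵐ p : (Fin m → ℝ) × (Fin n → ℝ), 0 ≤ u p.1 + v p.2 - w p + c p := by
      filter_upwards [cm_ae] with p hp
      rw [hp]
      rcases le_or_gt (cm p + u p.1 + v p.2) 0 with h | h
      · have hw : w p = cm p + u p.1 + v p.2 := min_eq_left h
        rw [hw]; linarith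
      · have hw : w p = 0 := min_eq_right (le_of_lt h)
        rw [hw]; linarith
    have hwn : ∀ᵐ p : (Fin m → ℝ) × (Fin n → ℝ), w p ≤ 0 :=
      Filter.Eventually.of_forall fun p => min_le_right _ _
    refine ⟨-(∫ x, u x * f x) - (∫ y, v y * g y) + (∫ p, w p * hbar p),
      ⟨u, v, w, hu_meas, hv_meas, w_meas, huf, hvg, hwh, hcon, hwn, rfl⟩, ?_⟩
    -- estimate the value
    have smeas : Measurable fun p : (Fin m → ℝ) × (Fin n → ℝ) =>
        min (c' p + u p.1 + v p.2) 0 :=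
      ((hc'cont.measurable.add (hu_meas.comp measurable_fst)).add
        (hv_meas.comp measurable_snd)).min measurable_const
    have min_int : Integrable (fun p => min (c' p + u p.1 + v p.2) 0 * hbar p) := by
      refine hbar_int.bdd_mul smeas.aestronglyMeasurable (c := B' + Bu + Bv) (Filter.Eventually.of_forall fun p => ?_)
      rw [Real.norm_eq_abs]
      have h2 : |min (c' p + u p.1 + v p.2) 0| ≤ |c' p + u p.1 + v p.2| := by
        rcases le_or_gt (c' p + u p.1 + v p.2) 0 with h | h
        · rw [min_eq_left h]
        · rw [min_eq_right (le_of_lt h)]; simp [abs_nonneg]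
      calc |min (c' p + u p.1 + v p.2) 0| ≤ |c' p + u p.1 + v p.2| := h2
        _ ≤ |c' p| + |u p.1| + |v p.2| := abs_add_three _ _ _
        _ ≤ B' + Bu + Bv := by
            have := hc'B p; have := hBu p.1; have := hBv p.2; linarith
    have west : (∫ p, min (c' p + u p.1 + v p.2) 0 * hbar p) - (∫ p, w p * hbar p)
        ≤ C₀ * δ := by
      rw [← integral_sub min_int hwh]
      refine le_trans (integral_mono_ae (min_int.sub hwh) diff_int ?_) diff_est
      filter_upwards [cm_ae] with p hp
      by_cases hpK : p ∈ K
      · have h1 : |min (c' p + u p.1 + v p.2) 0 - min (cm p + u p.1 + v p.2) 0|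
            ≤ |c' p - cm p| := by
          refine le_trans (abs_min_sub_min_le_max _ _ _ _) ?_
          simp only [sub_self, abs_zero]
          rw [max_eq_left (abs_nonneg _)]
          have e : c' p + u p.1 + v p.2 - (cm p + u p.1 + v p.2) = c' p - cm p := by ring
          rw [e]
        calc min (c' p + u p.1 + v p.2) 0 * hbar p - w p * hbar p
            = (min (c' p + u p.1 + v p.2) 0 - min (cm p + u p.1 + v p.2) 0) * hbar p := by
              have hw : w p = min (cm p + u p.1 + v p.2) 0 := rfl
              rw [hw]; ring
          _ ≤ |(min (c' p + u p.1 + v p.2) 0 - min (cm p + u p.1 + v p.2) 0) * hbar p| :=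
              le_abs_self _
          _ = |min (c' p + u p.1 + v p.2) 0 - min (cm p + u p.1 + v p.2) 0| * hbar p := by
              rw [abs_mul, abs_of_nonneg (hbar_nonneg p)]
          _ ≤ |c' p - cm p| * hbar p := mul_le_mul_of_nonneg_right h1 (hbar_nonneg p)
          _ ≤ |c' p - cm p| * C₀ := mul_le_mul_of_nonneg_left (hC₀ p) (abs_nonneg _)
          _ = ‖K.indicator c p - c' p‖ * C₀ := by
              rw [Set.indicator_of_mem hpK, Real.norm_eq_abs, ← hp, abs_sub_comm]
      · have hb0 : hbar p = 0 := hKsupp p hpK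
        rw [hb0, mul_zero, mul_zero, sub_zero]
        exact mul_nonneg (norm_nonneg _) hC₀0
    have : γ < -(∫ x, u x * f x) - (∫ y, v y * g y) + (∫ p, w p * hbar p) + C₀ * δ := by
      linarith [hdual, west]
    rw [hεδ]
    linarith
  have bdd : BddAbove S := ⟨V, fun r hr => ub r hr⟩
  obtain ⟨r1, hr1S, _⟩ := strong 1 one_pos
  have hne : S.Nonempty := ⟨r1, hr1S⟩
  apply le_antisymm
  · by_contra hlt
    push_neg at hlt
    obtain ⟨r, hrS, hr⟩ := strong (V - sSup S) (by linarith)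
    have := le_csSup bdd hrS
    linarith
  · exact csSup_le hne ub
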